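/- Suppose there exist utility indifference values for both logarithmic and all power utilities $U_p(x)=x^p/p$, $p\in(0,1)$, in the sense that the strictly positive random variable $q$ (with $\mathbb{E}[1/q]\le 1$, $\mathbb{E}[q^{p/(1-p)}]<\infty$ for all $p\in(0,1)$, and $\mathbb{E}[|\log q|]<\infty$) satisfies $\exp(\mathbb{E}[\log q]) = \mathbb{E}[q^{p/(1-p)}\,]^{(1-p)/p}$ for all $p\in(0,1)$. Then $q$ is almost surely equal to a constant $\ge 1$. -/
import Mathlib


open MeasureTheory ProbabilityTheory

/-- Abstract core of the universal-indifference-value characterization.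
If `q > 0` a.s. with `E[1/q] ≤ 1`, `E[q^{p/(1-p)}] < ∞` for all `p ∈ (0,1)`,
`log q` integrable, and the log- and power-utility indifference values agree:
`exp(E[log q]) = E[q^{p/(1-p)}]^{(1-p)/p}` for all `p ∈ (0,1)`, then `q` is a.s.
equal to a constant `≥ 1`. -/
theorem value_info_stmt18
    {Ω : Type*} {m0 : MeasurableSpace Ω} (μ : Measure Ω) [IsProbabilityMeasure μ]
    (q : Ω → ℝ) (hqmeas : Measurable q) (hqpos : ∀ᵐ ω ∂μ, 0 < q ω)
    (hinvint : Integrable (fun ω => (q ω)⁻¹) μ)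
    (hinv1 : ∫ ω, (q ω)⁻¹ ∂μ ≤ 1)
    (hmom : ∀ p : ℝ, p ∈ Set.Ioo (0 : ℝ) 1 → Integrable (fun ω => q ω ^ (p / (1 - p))) μ)
    (hlogint : Integrable (fun ω => Real.log (q ω)) μ)
    (heq : ∀ p : ℝ, p ∈ Set.Ioo (0 : ℝ) 1 →
      Real.exp (∫ ω, Real.log (q ω) ∂μ)
        = (∫ ω, q ω ^ (p / (1 - p)) ∂μ) ^ ((1 - p) / p)) :
    ∃ c : ℝ, 1 ≤ c ∧ q =ᵐ[μ] fun _ => c := by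
  have hhalf : (1 : ℝ) / 2 ∈ Set.Ioo (0 : ℝ) 1 := by norm_num
  have hdiv : ((1 : ℝ) / 2) / (1 - 1 / 2) = 1 := by norm_num
  have hqeq : (fun ω => q ω ^ (((1:ℝ)/2) / (1 - 1/2))) = q := by
    funext ω; rw [hdiv, Real.rpow_one]
  have hqint : Integrable q μ := by
    have := hmom (1/2) hhalf; rwa [hqeq] at this
  -- evaluate heq at p = 1/2
  have hkey : Real.exp (∫ ω, Real.log (q ω) ∂μ) = ∫ ω, q ω ∂μ := by
    have := heq (1/2) hhalf
    rw [hqeq] at this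
    have h1 : ((1 : ℝ) - 1 / 2) / (1 / 2) = 1 := by norm_num
    rwa [h1, Real.rpow_one] at this
  -- exp ∘ log q = q a.e.
  have hexplog : (fun ω => Real.exp (Real.log (q ω))) =ᵐ[μ] q := by
    filter_upwards [hqpos] with ω hω using Real.exp_log hω
  have hgi : Integrable (Real.exp ∘ fun ω => Real.log (q ω)) μ :=
    hqint.congr hexplog.symm
  have hjensen := strictConvexOn_exp.ae_eq_const_or_map_average_lt
    Real.continuous_exp.continuousOn isClosed_univ
    (Filter.Eventually.of_forall fun x => Set.mem_univ _) hlogint hgi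
  rw [average_eq_integral, average_eq_integral,
      integral_congr_ae hexplog, ← hkey] at hjensen
  rcases hjensen with h | h
  · -- log q is a.e. constant
    set m := ∫ ω, Real.log (q ω) ∂μ with hm
    refine ⟨Real.exp m, ?_, ?_⟩
    · -- show 1 ≤ exp m, i.e. 0 ≤ m, from E[1/q] = exp(-m) ≤ 1
      have hqc : q =ᵐ[μ] fun _ => Real.exp m := by
        filter_upwards [h, hqpos] with ω hω hpos
        simp only [Function.const] at hω
        rw [← hω, Real.exp_log hpos]
      have hinveq : (fun ω => (q ω)⁻¹) =ᵐ[μ] fun _ => Real.exp (-m) := by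
        filter_upwards [hqc] with ω hω
        rw [hω, ← Real.exp_neg]
      have : ∫ ω, (q ω)⁻¹ ∂μ = Real.exp (-m) := by
        rw [integral_congr_ae hinveq]; simp
      rw [this] at hinv1
      have hm0 : 0 ≤ m := by
        by_contra hc
        push_neg at hc
        have : (1:ℝ) < Real.exp (-m) := by
          rw [← Real.exp_zero]; exact Real.exp_lt_exp.mpr (by linarith)
        linarith
      calc (1:ℝ) = Real.exp 0 := by simp
        _ ≤ Real.exp m := Real.exp_le_exp.mpr hm0
    · filter_upwards [h, hqpos] with ω hω hpos
      simp only [Function.const] at hω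
      rw [← hω, Real.exp_log hpos]
  · exact absurd h (lt_irrefl _)
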